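/- Every nonzero vector x in the cone K_L = {x ∈ ℝⁿ : ⟪x,r⟫ ≥ (√(n−1)/√n)‖x‖} has all components nonnegative, and at most one component equal to zero. -/

import Mathlib

/-- Every nonzero `x ∈ K_L` has all components nonnegative, and at most one
component equal to zero. -/
theorem stmt5 (n : ℕ) (hn : 2 ≤ n) (x : EuclideanSpace ℝ (Fin n)) (hx : x ≠ 0)
    (hxK : (Real.sqrt (n - 1) / Real.sqrt n) * ‖x‖
        ≤ inner ℝ x ((WithLp.toLp 2 (fun _ => 1 / Real.sqrt n) : EuclideanSpace ℝ (Fin n)))) :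
    (∀ i, 0 ≤ x i) ∧ ∀ i j, x i = 0 → x j = 0 → i = j := by
  have hn0 : (0:ℝ) < n := by positivity
  have hn1 : (1:ℝ) ≤ (n:ℝ) := by exact_mod_cast hn.trans' (by norm_num)
  have hn2 : (2:ℝ) ≤ (n:ℝ) := by exact_mod_cast hn
  have hsqn : (0:ℝ) < Real.sqrt n := Real.sqrt_pos.mpr hn0
  have hN0 : 0 < ‖x‖ := norm_pos_iff.mpr hx
  set S := ∑ i, x i with hSdef
  have hinner : (inner ℝ x ((WithLp.toLp 2 (fun _ => 1 / Real.sqrt n) : EuclideanSpace ℝ (Fin n))) : ℝ)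
      = S / Real.sqrt n := by
    rw [PiLp.inner_apply]
    simp only [RCLike.inner_apply, conj_trivial, mul_one_div, PiLp.toLp_apply, one_div_mul_eq_div]
    rw [← Finset.sum_div]
  have hS : Real.sqrt ((n:ℝ) - 1) * ‖x‖ ≤ S := by
    rw [hinner, div_mul_eq_mul_div] at hxK
    exact (div_le_div_iff_of_pos_right hsqn).mp hxK
  have hSnn : 0 ≤ S := le_trans (by positivity) hS
  have hS2 : ((n:ℝ) - 1) * ‖x‖^2 ≤ S^2 := by
    calc ((n:ℝ) - 1) * ‖x‖^2 = (Real.sqrt ((n:ℝ)-1) * ‖x‖)^2 := by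
          rw [mul_pow, Real.sq_sqrt (by linarith)]
      _ ≤ S^2 := by
          apply pow_le_pow_left₀ (by positivity) hS
  have hN2 : ‖x‖^2 = ∑ i, (x i)^2 := by
    rw [EuclideanSpace.norm_eq, Real.sq_sqrt (by positivity)]
    simp [sq_abs]
  have hsumsq : ∀ T : Finset (Fin n), ∑ i ∈ T, (x i)^2 ≤ ‖x‖^2 := by
    intro T
    rw [hN2]
    exact Finset.sum_le_sum_of_subset_of_nonneg (Finset.subset_univ T)
      (fun i _ _ => sq_nonneg _)
  constructor
  · intro i
    by_contra h
    push_neg at h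
    set T := Finset.univ.erase i with hT
    have hcard : (T.card : ℝ) = (n:ℝ) - 1 := by
      rw [hT, Finset.card_erase_of_mem (Finset.mem_univ i), Finset.card_univ,
        Fintype.card_fin]
      push_cast [Nat.cast_sub (by omega : 1 ≤ n)]
      ring
    have hsum : ∑ j ∈ T, x j = S - x i := by
      rw [hT, Finset.sum_erase_eq_sub (Finset.mem_univ i)]
    have hcs : (S - x i)^2 ≤ ((n:ℝ) - 1) * ‖x‖^2 := by
      calc (S - x i)^2 = (∑ j ∈ T, x j)^2 := by rw [hsum]
        _ ≤ (T.card : ℝ) * ∑ j ∈ T, (x j)^2 := sq_sum_le_card_mul_sum_sq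
        _ ≤ ((n:ℝ) - 1) * ‖x‖^2 := by
            rw [hcard]
            exact mul_le_mul_of_nonneg_left (hsumsq T) (by linarith)
    have hgt : S^2 < (S - x i)^2 := by
      apply pow_lt_pow_left₀ (by linarith) hSnn
      omega
    linarith
  · intro i j hi hj
    by_contra hij
    set T := Finset.univ \ ({i, j} : Finset (Fin n)) with hT
    have hcard : (T.card : ℝ) = (n:ℝ) - 2 := by
      rw [hT, Finset.card_sdiff_of_subset (Finset.subset_univ _), Finset.card_pair hij,
        Finset.card_univ, Fintype.card_fin]
      push_cast [Nat.cast_sub hn]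
      ring
    have hsum : ∑ k ∈ T, x k = S := by
      rw [hSdef, ← Finset.sum_sdiff (Finset.subset_univ ({i, j} : Finset (Fin n)))]
      rw [← hT]
      have : ∑ k ∈ ({i, j} : Finset (Fin n)), x k = 0 := by
        rw [Finset.sum_pair hij, hi, hj, add_zero]
      rw [this, add_zero]
    have hcs : S^2 ≤ ((n:ℝ) - 2) * ‖x‖^2 := by
      calc S^2 = (∑ k ∈ T, x k)^2 := by rw [hsum]
        _ ≤ (T.card : ℝ) * ∑ k ∈ T, (x k)^2 := sq_sum_le_card_mul_sum_sq
        _ ≤ ((n:ℝ) - 2) * ‖x‖^2 := by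
            rw [hcard]
            exact mul_le_mul_of_nonneg_left (hsumsq T) (by linarith)
    nlinarith [sq_nonneg ‖x‖, hN0, mul_pos hN0 hN0]
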